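/- Fixed point of the coin-flip loop: define the map 𝓕 on pairs (𝒞, F), where 𝒞 is a linear map on 2×2 matrices and F a 2×2 matrix, by 𝓕(𝒞, F) := (ρ ↦ P₀ ρ P₀ + 𝒞(H P₁ ρ P₁ H), |0⟩⟨0| ) with P₀ = |0⟩⟨0|, P₁ = |1⟩⟨1|, and H the Hadamard matrix. Then the n-fold iterate 𝓕ⁿ(0,0) has first component ρ ↦ P₀ ρ P₀ + (Σ_{k=1}^{n-1} 2^{-k}) ⟨1|ρ|1⟩ |0⟩⟨0| for all n ≥ 1, and as n → ∞ this converges pointwise to ρ ↦ Tr(ρ) |0⟩⟨0|. -/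

import Mathlib

open Matrix

noncomputable def P0 : Matrix (Fin 2) (Fin 2) ℂ := Matrix.single 0 0 1
noncomputable def P1 : Matrix (Fin 2) (Fin 2) ℂ := Matrix.single 1 1 1

/-- The Hadamard matrix. -/
noncomputable def Had : Matrix (Fin 2) (Fin 2) ℂ :=
  ((1 / Real.sqrt 2 : ℝ) : ℂ) • !![1, 1; 1, -1]

/-- The semantic map of the coin-flip while loop:
`𝓕(𝒞, F) = (ρ ↦ P₀ ρ P₀ + 𝒞(H P₁ ρ P₁ H), |0⟩⟨0|)`. -/
noncomputable def coinStep
    (CF : (Matrix (Fin 2) (Fin 2) ℂ →ₗ[ℂ] Matrix (Fin 2) (Fin 2) ℂ) ×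
      Matrix (Fin 2) (Fin 2) ℂ) :
    (Matrix (Fin 2) (Fin 2) ℂ →ₗ[ℂ] Matrix (Fin 2) (Fin 2) ℂ) ×
      Matrix (Fin 2) (Fin 2) ℂ :=
  ((LinearMap.mulLeft ℂ P0).comp (LinearMap.mulRight ℂ P0) +
      CF.1.comp (((LinearMap.mulLeft ℂ Had).comp (LinearMap.mulRight ℂ Had)).comp
        ((LinearMap.mulLeft ℂ P1).comp (LinearMap.mulRight ℂ P1))),
    P0)

lemma hP0 (ρ : Matrix (Fin 2) (Fin 2) ℂ) : P0 * ρ * P0 = ρ 0 0 • P0 := by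
  ext i j
  fin_cases i <;> fin_cases j <;>
    simp [P0, Matrix.mul_apply, Fin.sum_univ_two, Matrix.single]

lemma hP1 (ρ : Matrix (Fin 2) (Fin 2) ℂ) : P1 * ρ * P1 = ρ 1 1 • P1 := by
  ext i j
  fin_cases i <;> fin_cases j <;>
    simp [P1, Matrix.mul_apply, Fin.sum_univ_two, Matrix.single]

lemma h2 : ((Real.sqrt 2 : ℝ) : ℂ)⁻¹ * ((Real.sqrt 2 : ℝ) : ℂ)⁻¹ = 1/2 := by
  rw [← mul_inv]
  norm_cast
  rw [Real.mul_self_sqrt (by norm_num)]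
  norm_num

lemma P1eq : P1 = !![0,0;0,1] := by
  ext i j
  fin_cases i <;> fin_cases j <;> simp [P1, Matrix.single]

lemma hHPH : Had * P1 * Had = ((1:ℂ)/2) • !![1,-1;-1,1] := by
  rw [P1eq]
  simp only [Had, Matrix.smul_mul, Matrix.mul_smul, smul_smul, Matrix.mul_fin_two]
  norm_num
  rw [h2]

noncomputable def s (m : ℕ) : ℂ := ∑ k ∈ Finset.Icc 1 m, ((1 : ℂ) / 2) ^ k

lemma s_eq (n : ℕ) : s n = (1/2) * ∑ k ∈ Finset.range n, ((1:ℂ)/2)^k := by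
  rw [s, ← Finset.Ico_add_one_right_eq_Icc, Finset.sum_Ico_eq_sum_range, Finset.mul_sum]
  exact Finset.sum_congr rfl fun x _ => by ring

lemma s_succ (m : ℕ) : s (m + 1) = (1/2) * (1 + s m) := by
  rw [s_eq, s_eq, geom_sum_succ]
  ring

lemma iter_eq (m : ℕ) (ρ : Matrix (Fin 2) (Fin 2) ℂ) :
    ((coinStep^[m + 1]) (0, 0)).1 ρ = P0 * ρ * P0 + (s m * ρ 1 1) • P0 := by
  induction m generalizing ρ with
  | zero =>
    simp [coinStep, s, mul_assoc]
  | succ m ih =>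
    rw [Function.iterate_succ_apply']
    have harg : Had * ((P1 * (ρ * P1)) * Had) = (ρ 1 1 * (1/2)) • !![1,-1;-1,1] := by
      have assoc : Had * ((P1 * (ρ * P1)) * Had) = Had * (P1 * ρ * P1) * Had := by
        noncomm_ring
      rw [assoc, hP1, Matrix.mul_smul, Matrix.smul_mul, hHPH, smul_smul]
    simp only [coinStep, LinearMap.add_apply, LinearMap.comp_apply,
      LinearMap.mulLeft_apply, LinearMap.mulRight_apply]
    rw [show P0 * (ρ * P0) = P0 * ρ * P0 from (mul_assoc _ _ _).symm, harg, LinearMap.map_smul, ih]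
    have hM : P0 * !![(1:ℂ),-1;-1,1] * P0 = (1:ℂ) • P0 := by
      rw [hP0]; norm_num
    rw [hM]
    norm_num
    rw [smul_smul, ← add_smul, s_succ]
    congr 1
    ring

/-- The iterates of the coin-flip loop map, started from `(0, 0)`, have first
component `ρ ↦ P₀ ρ P₀ + (Σ_{k=1}^{n-1} 2^{-k}) ⟨1|ρ|1⟩ |0⟩⟨0|`, and converge
(entrywise) to `ρ ↦ Tr(ρ) |0⟩⟨0|`. -/
theorem coin_loop_fixed_point :
    (∀ n : ℕ, 1 ≤ n → ∀ ρ : Matrix (Fin 2) (Fin 2) ℂ,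
        ((coinStep^[n]) (0, 0)).1 ρ =
          P0 * ρ * P0 + ((∑ k ∈ Finset.Icc 1 (n - 1), ((1 : ℂ) / 2) ^ k) * ρ 1 1) • P0) ∧
      ∀ ρ : Matrix (Fin 2) (Fin 2) ℂ, ∀ i j : Fin 2,
        Filter.Tendsto (fun n : ℕ => (((coinStep^[n]) (0, 0)).1 ρ) i j)
          Filter.atTop (nhds ((ρ.trace • P0) i j)) := by
  have part1 : ∀ n : ℕ, 1 ≤ n → ∀ ρ : Matrix (Fin 2) (Fin 2) ℂ,
      ((coinStep^[n]) (0, 0)).1 ρ =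
        P0 * ρ * P0 + ((∑ k ∈ Finset.Icc 1 (n - 1), ((1 : ℂ) / 2) ^ k) * ρ 1 1) • P0 := by
    intro n hn ρ
    obtain ⟨m, rfl⟩ := Nat.exists_eq_add_of_le' hn
    rw [iter_eq m ρ]
    norm_num [s]
  refine ⟨part1, ?_⟩
  intro ρ i j
  -- limit of s
  have hs_range : ∀ n : ℕ, s n = (∑ k ∈ Finset.range (n+1), ((1:ℂ)/2)^k) - 1 := by
    intro n
    rw [s_eq, geom_sum_succ]
    ring
  have hnorm : ‖((1:ℂ)/2)‖ < 1 := by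
    simp
    norm_num
  have hgeo : Filter.Tendsto (fun n => ∑ k ∈ Finset.range n, ((1:ℂ)/2)^k)
      Filter.atTop (nhds 2) := by
    have h := (hasSum_geometric_of_norm_lt_one hnorm).tendsto_sum_nat
    have : ((1:ℂ) - 1/2)⁻¹ = 2 := by norm_num
    rwa [this] at h
  have hS : Filter.Tendsto s Filter.atTop (nhds 1) := by
    have h1 : Filter.Tendsto (fun n : ℕ =>
        (∑ k ∈ Finset.range (n+1), ((1:ℂ)/2)^k) - 1) Filter.atTop (nhds (2 - 1)) :=
      (hgeo.comp (Filter.tendsto_add_atTop_nat 1)).sub tendsto_const_nhds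
    have hfe : (fun n : ℕ => (∑ k ∈ Finset.range (n+1), ((1:ℂ)/2)^k) - 1) = s :=
      funext fun n => (hs_range n).symm
    rw [hfe, show (2:ℂ) - 1 = 1 by norm_num] at h1
    exact h1
  have hS' : Filter.Tendsto (fun n : ℕ => s (n - 1)) Filter.atTop (nhds 1) :=
    hS.comp (Filter.tendsto_sub_atTop_nat 1)
  have hlim : Filter.Tendsto
      (fun n : ℕ => ρ 0 0 * P0 i j + s (n - 1) * (ρ 1 1 * P0 i j))
      Filter.atTop (nhds (ρ 0 0 * P0 i j + 1 * (ρ 1 1 * P0 i j))) :=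
    Filter.Tendsto.const_add _ (hS'.mul_const _)
  have heq : ∀ᶠ n : ℕ in Filter.atTop,
      ρ 0 0 * P0 i j + s (n - 1) * (ρ 1 1 * P0 i j) = (((coinStep^[n]) (0, 0)).1 ρ) i j := by
    filter_upwards [Filter.eventually_ge_atTop 1] with n hn
    rw [part1 n hn ρ, Matrix.add_apply, Matrix.smul_apply, hP0, Matrix.smul_apply, ← s]
    simp only [smul_eq_mul]
    ring
  have := hlim.congr' heq
  convert this using 2
  simp [Matrix.trace_fin_two, Matrix.smul_apply]
  ring
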